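/- Let r and s be nonzero integers with r > 0 and gcd(r, s) = 1, and let n ≥ 2. For nonzero integers (q_1, …, q_n) with gcd(q_1·q_2⋯q_n, s) = 1, the following are equivalent: (1) the q_i satisfy the cyclic system of congruences r·((∏_{k=1}^n q_k)/q_i) ≡ s (mod |q_i|) for all 1 ≤ i ≤ n; (2) there exists an integer m such that r·(1/q_1 + ⋯ + 1/q_n) − s/(q_1·q_2⋯q_n) = m. -/

import Mathlib

open Finset

/-- **Lemma 2.1.** For nonzero integers `q_i` with
`gcd(q_1 ⋯ q_n, s) = 1`, satisfying the cyclic system of congruences is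
equivalent to satisfying `r (1/q_1 + ⋯ + 1/q_n) - s/(q_1 ⋯ q_n) = m` for
some integer `m`. -/
theorem cyclic_congruence_iff_diophantine
    (r s : ℤ) (hr : 0 < r) (hs : s ≠ 0) (hrs : Int.gcd r s = 1)
    (n : ℕ) (hn : 2 ≤ n)
    (q : Fin n → ℤ) (hq : ∀ i, q i ≠ 0)
    (hgcd : Int.gcd (∏ i, q i) s = 1) :
    (∀ i, q i ∣ r * (∏ k ∈ Finset.univ.erase i, q k) - s) ↔
      ∃ m : ℤ,
        (r : ℚ) * (∑ i, ((q i : ℚ))⁻¹) - (s : ℚ) / (∏ i, (q i : ℚ)) = (m : ℚ) := by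
  classical
  set P : ℤ := ∏ i, q i with hP
  have hP0 : P ≠ 0 := Finset.prod_ne_zero_iff.mpr fun i _ => hq i
  set N : ℤ := r * (∑ i, ∏ k ∈ Finset.univ.erase i, q k) - s with hN
  have hPQ : (∏ i, (q i : ℚ)) = (P : ℚ) := by
    rw [hP]; push_cast; rfl
  have hPQ0 : (P : ℚ) ≠ 0 := Int.cast_ne_zero.mpr hP0
  -- the rational expression equals N / P
  have hsum : (∑ i, ((q i : ℚ))⁻¹)
      = ((∑ i, ∏ k ∈ Finset.univ.erase i, q k : ℤ) : ℚ) / (P : ℚ) := by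
    push_cast
    rw [Finset.sum_div]
    refine Finset.sum_congr rfl fun i _ => ?_
    have hqi : (q i : ℚ) ≠ 0 := Int.cast_ne_zero.mpr (hq i)
    have hprod : (∏ k ∈ Finset.univ.erase i, (q k : ℚ)) * (q i : ℚ) = (P : ℚ) := by
      rw [Finset.prod_erase_mul _ _ (Finset.mem_univ i), ← hPQ]
    have hX : (∏ k ∈ Finset.univ.erase i, (q k : ℚ)) ≠ 0 :=
      Finset.prod_ne_zero_iff.mpr fun k _ => Int.cast_ne_zero.mpr (hq k)
    rw [← hprod, div_mul_cancel_left₀ hX]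
  have hexpr : (r : ℚ) * (∑ i, ((q i : ℚ))⁻¹) - (s : ℚ) / (∏ i, (q i : ℚ))
      = (N : ℚ) / (P : ℚ) := by
    rw [hsum, hPQ, hN]
    push_cast
    field_simp
  -- existence of m ↔ P ∣ N
  have hm_iff : (∃ m : ℤ, (r : ℚ) * (∑ i, ((q i : ℚ))⁻¹)
      - (s : ℚ) / (∏ i, (q i : ℚ)) = (m : ℚ)) ↔ P ∣ N := by
    rw [hexpr]
    constructor
    · rintro ⟨m, hm⟩
      rw [div_eq_iff hPQ0] at hm
      refine ⟨m, ?_⟩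
      have hm' : (N : ℚ) = (P : ℚ) * m := hm.trans (mul_comm _ _)
      exact_mod_cast hm'
    · rintro ⟨m, hm⟩
      exact ⟨m, by rw [hm]; push_cast; field_simp⟩
  rw [hm_iff]
  -- N splits at index i
  have hsplit : ∀ i : Fin n, N = (r * (∏ k ∈ Finset.univ.erase i, q k) - s)
      + r * ∑ j ∈ Finset.univ.erase i, ∏ k ∈ Finset.univ.erase j, q k := by
    intro i
    rw [hN, ← Finset.add_sum_erase _ _ (Finset.mem_univ i)]
    ring
  have htail : ∀ i : Fin n,
      q i ∣ ∑ j ∈ Finset.univ.erase i, ∏ k ∈ Finset.univ.erase j, q k := by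
    intro i
    refine Finset.dvd_sum fun j hj => ?_
    exact Finset.dvd_prod_of_mem q
      (Finset.mem_erase.mpr ⟨(Finset.ne_of_mem_erase hj).symm, Finset.mem_univ i⟩)
  constructor
  · intro h
    -- pairwise coprime
    have hcop : ∀ i j : Fin n, i ≠ j → IsCoprime (q i) (q j) := by
      intro i j hij
      rw [Int.isCoprime_iff_gcd_eq_one]
      have hd1 : (↑(Int.gcd (q i) (q j)) : ℤ) ∣ q i := Int.gcd_dvd_left _ _
      have hd2 : (↑(Int.gcd (q i) (q j)) : ℤ) ∣ q j := Int.gcd_dvd_right _ _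
      have hjprod : q j ∣ ∏ k ∈ Finset.univ.erase i, q k :=
        Finset.dvd_prod_of_mem q (Finset.mem_erase.mpr ⟨hij.symm, Finset.mem_univ j⟩)
      have hds : (↑(Int.gcd (q i) (q j)) : ℤ) ∣ s := by
        have h1 : (↑(Int.gcd (q i) (q j)) : ℤ) ∣ r * (∏ k ∈ Finset.univ.erase i, q k) - s :=
          hd1.trans (h i)
        have h2 : (↑(Int.gcd (q i) (q j)) : ℤ) ∣ r * (∏ k ∈ Finset.univ.erase i, q k) :=
          (hd2.trans hjprod).mul_left r
        have := dvd_sub h2 h1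
        simpa using this
      have hdP : (↑(Int.gcd (q i) (q j)) : ℤ) ∣ P :=
        hd1.trans (Finset.dvd_prod_of_mem q (Finset.mem_univ i))
      have : (↑(Int.gcd (q i) (q j)) : ℤ) ∣ (↑(Int.gcd P s) : ℤ) :=
        Int.dvd_coe_gcd hdP hds
      rw [hgcd] at this
      have h1 : (↑(Int.gcd (q i) (q j)) : ℤ) ∣ (1 : ℤ) := by exact_mod_cast this
      exact Nat.dvd_one.mp (by exact_mod_cast h1)
    have hdvdN : ∀ i, q i ∣ N := by
      intro i
      rw [hsplit i]
      exact dvd_add (h i) ((htail i).mul_left r)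
    refine Finset.prod_dvd_of_coprime ?_ (fun i _ => hdvdN i)
    intro i hi j hj hij
    exact hcop i j hij
  · intro ⟨m, hm⟩ i
    have hiN : q i ∣ N := (Finset.dvd_prod_of_mem q (Finset.mem_univ i)).trans ⟨m, hm⟩
    have := hsplit i
    have h2 : q i ∣ r * ∑ j ∈ Finset.univ.erase i, ∏ k ∈ Finset.univ.erase j, q k :=
      (htail i).mul_left r
    have : q i ∣ N - r * ∑ j ∈ Finset.univ.erase i, ∏ k ∈ Finset.univ.erase j, q k :=
      dvd_sub hiN h2
    rw [hsplit i] at this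
    simpa using this
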